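/- Let A ∈ ℝ^{m×n} with SVD truncation A_r = S_{r,A} Σ_{r,A} T_{r,A}^T (r ≤ rank A, and σ_r(A) > 0), and let H ∈ ℝ^{n×r}. If the r×r matrix T_{r,A}^T H is nonsingular, then ‖(A_r H)⁺‖ ≤ ‖(T_{r,A}^T H)⁻¹‖ / σ_r(A). -/

import Mathlib

open Matrix

/-- The `j`-th largest singular value (1-indexed) of a real matrix, defined as the square
root of the `j`-th largest eigenvalue of `AᴴA`; it is `0` for `j` out of range. -/
noncomputable def singularValue {m n : ℕ} (A : Matrix (Fin m) (Fin n) ℝ) (j : ℕ) : ℝ :=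
  if h : 1 ≤ j ∧ j ≤ n then
    Real.sqrt ((Matrix.isHermitian_conjTranspose_mul_self A).eigenvalues
      (Tuple.sort (Matrix.isHermitian_conjTranspose_mul_self A).eigenvalues ⟨n - j, by omega⟩))
  else 0


/-- The Moore–Penrose pseudoinverse of a full-column-rank matrix: `A⁺ = (AᵀA)⁻¹ Aᵀ`. -/
noncomputable def pinvFCR {m n : ℕ} (A : Matrix (Fin m) (Fin n) ℝ) : Matrix (Fin n) (Fin m) ℝ :=
  (Aᵀ * A)⁻¹ * Aᵀ


lemma dot_mulVec_self {a b : ℕ} (X : Matrix (Fin a) (Fin b) ℝ) (v : Fin b → ℝ) :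
    (X *ᵥ v) ⬝ᵥ (X *ᵥ v) = v ⬝ᵥ ((Xᴴ * X) *ᵥ v) := by
  rw [conjTranspose_eq_transpose_of_trivial, ← mulVec_mulVec,
    dotProduct_mulVec v, vecMul_transpose, dotProduct_comm]

lemma rayleigh_le {b : ℕ} {G : Matrix (Fin b) (Fin b) ℝ} (hG : G.IsHermitian) {lam : ℝ}
    (hlam : ∀ i, hG.eigenvalues i ≤ lam) (v : Fin b → ℝ) :
    v ⬝ᵥ (G *ᵥ v) ≤ lam * (v ⬝ᵥ v) := by
  set U : Matrix (Fin b) (Fin b) ℝ := (hG.eigenvectorUnitary : Matrix (Fin b) (Fin b) ℝ) with hUdef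
  have hUU : U * star U = 1 := Unitary.coe_mul_star_self _
  have hpsd : PosSemidef (lam • (1 : Matrix (Fin b) (Fin b) ℝ) - G) := by
    have h1 : lam • (1 : Matrix (Fin b) (Fin b) ℝ) - G
        = U * diagonal (fun i => lam - hG.eigenvalues i) * Uᴴ := by
      calc lam • (1 : Matrix (Fin b) (Fin b) ℝ) - G
          = U * (lam • 1) * star U - U * diagonal (RCLike.ofReal ∘ hG.eigenvalues) * star U := by
            rw [← (show G = U * diagonal (RCLike.ofReal ∘ hG.eigenvalues) * star U from hG.spectral_theorem)]; congr 1
            rw [Matrix.mul_smul, Matrix.mul_one, Matrix.smul_mul, hUU]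
        _ = U * (lam • 1 - diagonal (RCLike.ofReal ∘ hG.eigenvalues)) * star U := by
            rw [Matrix.mul_sub, Matrix.sub_mul]
        _ = U * diagonal (fun i => lam - hG.eigenvalues i) * Uᴴ := by
            rw [smul_one_eq_diagonal, diagonal_sub, Matrix.star_eq_conjTranspose]
            norm_num [Function.comp]
    rw [h1]
    exact (Matrix.posSemidef_diagonal_iff.mpr fun i => by
      simpa using hlam i).mul_mul_conjTranspose_same _
  have := hpsd.dotProduct_mulVec_nonneg v
  simp only [sub_mulVec, smul_mulVec, one_mulVec, star_trivial, dotProduct_sub,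
    dotProduct_smul, smul_eq_mul, sub_nonneg] at this
  linarith

lemma svMax_spec {b : ℕ} (hb : 1 ≤ b) {G : Matrix (Fin b) (Fin b) ℝ} (hG : G.IsHermitian)
    (i : Fin b) :
    hG.eigenvalues i ≤ hG.eigenvalues (Tuple.sort hG.eigenvalues ⟨b - 1, by omega⟩) := by
  have h1 : hG.eigenvalues i
      = (hG.eigenvalues ∘ Tuple.sort hG.eigenvalues) ((Tuple.sort hG.eigenvalues).symm i) := by
    simp
  rw [h1]
  exact Tuple.monotone_sort hG.eigenvalues
    (by have h := ((Tuple.sort hG.eigenvalues).symm i).isLt; rw [Fin.le_def]; simp; omega)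

lemma sv_nonneg {a b : ℕ} (X : Matrix (Fin a) (Fin b) ℝ) (j : ℕ) : 0 ≤ singularValue X j := by
  rw [singularValue]; split
  · exact Real.sqrt_nonneg _
  · exact le_refl 0

lemma sv_one_mulVec_bound {a b : ℕ} (X : Matrix (Fin a) (Fin b) ℝ) (v : Fin b → ℝ) :
    (X *ᵥ v) ⬝ᵥ (X *ᵥ v) ≤ (singularValue X 1) ^ 2 * (v ⬝ᵥ v) := by
  rcases Nat.eq_zero_or_pos b with hb | hb
  · subst hb; simp [mulVec, dotProduct]
  · have hG := Matrix.isHermitian_conjTranspose_mul_self X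
    have h1 : singularValue X 1 = Real.sqrt (hG.eigenvalues
        (Tuple.sort hG.eigenvalues ⟨b - 1, by omega⟩)) := by
      rw [singularValue, dif_pos ⟨le_refl 1, hb⟩]
    have hnn := Matrix.eigenvalues_conjTranspose_mul_self_nonneg X
      (Tuple.sort hG.eigenvalues ⟨b - 1, by omega⟩)
    rw [h1, Real.sq_sqrt hnn]
    calc (X *ᵥ v) ⬝ᵥ (X *ᵥ v) = v ⬝ᵥ ((Xᴴ * X) *ᵥ v) := dot_mulVec_self X v
      _ ≤ _ := rayleigh_le hG (svMax_spec hb hG) v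

lemma sv_one_le {a b : ℕ} (X : Matrix (Fin a) (Fin b) ℝ) {c : ℝ} (hc : 0 ≤ c)
    (h : ∀ v : Fin b → ℝ, (X *ᵥ v) ⬝ᵥ (X *ᵥ v) ≤ c ^ 2 * (v ⬝ᵥ v)) :
    singularValue X 1 ≤ c := by
  rcases Nat.eq_zero_or_pos b with hb | hb
  · subst hb; rw [singularValue, dif_neg (by omega)]; exact hc
  · have hG := Matrix.isHermitian_conjTranspose_mul_self X
    set i0 := Tuple.sort hG.eigenvalues ⟨b - 1, by omega⟩ with hi0
    set w : Fin b → ℝ := ⇑(hG.eigenvectorBasis i0) with hw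
    have hGw : (Xᴴ * X) *ᵥ w = hG.eigenvalues i0 • w := hG.mulVec_eigenvectorBasis i0
    have hww : w ⬝ᵥ w = 1 := by
      have hnorm : ‖hG.eigenvectorBasis i0‖ = 1 := hG.eigenvectorBasis.orthonormal.1 i0
      have h2 : w ⬝ᵥ w = @inner ℝ _ _ (hG.eigenvectorBasis i0) (hG.eigenvectorBasis i0) := by
        simp only [dotProduct, PiLp.inner_apply, hw, RCLike.inner_apply, conj_trivial]
      rw [h2, real_inner_self_eq_norm_sq, hnorm]; norm_num
    have key : hG.eigenvalues i0 ≤ c ^ 2 := by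
      have h3 := h w
      rw [dot_mulVec_self, hGw] at h3
      simpa [dotProduct_smul, hww] using h3
    rw [singularValue, dif_pos ⟨le_refl 1, hb⟩, ← hi0]
    calc Real.sqrt (hG.eigenvalues i0) ≤ Real.sqrt (c ^ 2) := Real.sqrt_le_sqrt key
      _ = c := Real.sqrt_sq hc

lemma sv_anti {m n : ℕ} (A : Matrix (Fin m) (Fin n) ℝ) {j r : ℕ} (h1 : 1 ≤ j) (h2 : j ≤ r)
    (h3 : r ≤ n) : singularValue A r ≤ singularValue A j := by
  rw [singularValue, singularValue, dif_pos ⟨by omega, h3⟩, dif_pos ⟨h1, by omega⟩]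
  apply Real.sqrt_le_sqrt
  exact Tuple.monotone_sort (Matrix.isHermitian_conjTranspose_mul_self A).eigenvalues
    (by rw [Fin.le_def]; simp; omega)

/-- Let `A ∈ ℝ^{m×n}` have SVD `A = S Σ Tᵀ`, with rank-r SVD truncation
`A_r = S Σ_r Tᵀ` (`r ≤ rank A`, i.e. `σ_r(A) > 0`), and let `H ∈ ℝ^{n×r}`.
If `T_{r}ᵀ H` is nonsingular (`T_r` = first r columns of `T`), then
`‖(A_r H)⁺‖ ≤ ‖(T_rᵀ H)⁻¹‖ / σ_r(A)` in the spectral norm. -/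
theorem pinv_truncation_mul_norm_le
    {m n r : ℕ} (hrm : r ≤ m) (hrn : r ≤ n)
    (A : Matrix (Fin m) (Fin n) ℝ)
    (S : Matrix (Fin m) (Fin m) ℝ) (T : Matrix (Fin n) (Fin n) ℝ)
    (hS : Sᵀ * S = 1) (hT : Tᵀ * T = 1)
    (hSVD : A = S * (Matrix.of fun (i : Fin m) (j : Fin n) =>
      if (i : ℕ) = (j : ℕ) then singularValue A (i.1 + 1) else 0) * Tᵀ)
    (hσ : 0 < singularValue A r)
    (H : Matrix (Fin n) (Fin r) ℝ)
    (hinv : IsUnit ((T.submatrix id (Fin.castLE hrn))ᵀ * H).det) :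
    singularValue (pinvFCR ((S * (Matrix.of fun (i : Fin m) (j : Fin n) =>
        if (i : ℕ) = (j : ℕ) ∧ (i : ℕ) < r then singularValue A (i.1 + 1) else 0) * Tᵀ) * H)) 1 ≤
      singularValue (((T.submatrix id (Fin.castLE hrn))ᵀ * H)⁻¹) 1 / singularValue A r := by
  classical
  have hr1 : 1 ≤ r := by
    by_contra h
    rw [singularValue, dif_neg (by omega)] at hσ
    exact lt_irrefl 0 hσ
  set F : Matrix (Fin m) (Fin r) ℝ :=
    Matrix.of (fun i p => if i = Fin.castLE hrm p then (1 : ℝ) else 0) with hF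
  set Gm : Matrix (Fin n) (Fin r) ℝ :=
    Matrix.of (fun i p => if i = Fin.castLE hrn p then (1 : ℝ) else 0) with hGm
  set D : Matrix (Fin r) (Fin r) ℝ :=
    Matrix.diagonal (fun p : Fin r => singularValue A (p.1 + 1)) with hD
  have hσp : ∀ p : Fin r, 0 < singularValue A (p.1 + 1) := fun p =>
    lt_of_lt_of_le hσ (sv_anti A (by omega) (by omega) hrn)
  -- Σ_r = F * D * Gmᵀ
  have hSig : (Matrix.of fun (i : Fin m) (j : Fin n) =>
      if (i : ℕ) = (j : ℕ) ∧ (i : ℕ) < r then singularValue A (i.1 + 1) else 0)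
      = F * D * Gmᵀ := by
    ext i j
    have hentry : (F * D * Gmᵀ) i j = ∑ p : Fin r,
        (if i = Fin.castLE hrm p then (1 : ℝ) else 0) * singularValue A (p.1 + 1) *
        (if j = Fin.castLE hrn p then (1 : ℝ) else 0) := by
      rw [Matrix.mul_apply]
      refine Finset.sum_congr rfl fun p _ => ?_
      rw [Matrix.mul_diagonal]
      simp [hF, hGm]
    rw [hentry]
    by_cases hir : (i : ℕ) < r
    · rw [Finset.sum_eq_single (⟨(i : ℕ), hir⟩ : Fin r)]
      · have h1 : i = Fin.castLE hrm ⟨(i : ℕ), hir⟩ := by apply Fin.ext; rfl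
        by_cases hij : (i : ℕ) = (j : ℕ)
        · have h2 : j = Fin.castLE hrn ⟨(i : ℕ), hir⟩ := by apply Fin.ext; exact hij.symm
          rw [Matrix.of_apply, if_pos ⟨hij, hir⟩, if_pos h1, if_pos h2]
          simp
        · have h2 : ¬(j = Fin.castLE hrn ⟨(i : ℕ), hir⟩) := fun h =>
            hij (by rw [h]; rfl)
          rw [Matrix.of_apply, if_neg (fun hc => hij hc.1), if_neg h2, mul_zero]
      · intro p _ hp
        have : ¬(i = Fin.castLE hrm p) := fun h => hp (by
          apply Fin.ext
          have : (i : ℕ) = (p : ℕ) := by rw [h]; rfl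
          exact this.symm ▸ rfl)
        rw [if_neg this, zero_mul, zero_mul]
      · intro h; exact absurd (Finset.mem_univ _) h
    · have hz : ∀ p : Fin r, (if i = Fin.castLE hrm p then (1 : ℝ) else 0) *
          singularValue A (p.1 + 1) * (if j = Fin.castLE hrn p then (1 : ℝ) else 0) = 0 := by
        intro p
        have : ¬(i = Fin.castLE hrm p) := fun h => hir (by rw [h]; exact p.isLt)
        rw [if_neg this, zero_mul, zero_mul]
      rw [Finset.sum_congr rfl fun p _ => hz p, Finset.sum_const, smul_zero,
        Matrix.of_apply, if_neg (fun hc => hir hc.2)]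
  -- T_r = T * Gm
  have hTG : T.submatrix id (Fin.castLE hrn) = T * Gm := by
    ext i p
    rw [Matrix.mul_apply]
    simp only [hGm, Matrix.of_apply, Matrix.submatrix_apply, id_eq, mul_ite, mul_one, mul_zero]
    rw [Finset.sum_ite_eq' Finset.univ (Fin.castLE hrn p) (fun k => T i k)]
    simp
  have hFtF : Fᵀ * F = 1 := by
    ext p q
    rw [Matrix.mul_apply]
    simp only [hF, Matrix.transpose_apply, Matrix.of_apply, ite_mul, one_mul, zero_mul]
    rw [Finset.sum_ite_eq' Finset.univ (Fin.castLE hrm p)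
      (fun k => if k = Fin.castLE hrm q then (1 : ℝ) else 0)]
    simp [Matrix.one_apply, Fin.castLE_inj, eq_comm]
  -- SF has orthonormal columns
  set SF : Matrix (Fin m) (Fin r) ℝ := S * F with hSF
  have hSFt : SFᵀ * SF = 1 := by
    rw [hSF, Matrix.transpose_mul, Matrix.mul_assoc, ← Matrix.mul_assoc Sᵀ S F, hS,
      Matrix.one_mul, hFtF]
  set B : Matrix (Fin r) (Fin r) ℝ := (T.submatrix id (Fin.castLE hrn))ᵀ * H with hB
  have hBG : B = Gmᵀ * (Tᵀ * H) := by
    rw [hB, hTG, Matrix.transpose_mul, Matrix.mul_assoc]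
  have hdetD : IsUnit D.det := by
    rw [hD, Matrix.det_diagonal]
    exact (Finset.prod_pos fun p _ => hσp p).ne'.isUnit
  have hDt : Dᵀ = D := by rw [hD, Matrix.diagonal_transpose]
  have hM : S * (F * D * Gmᵀ) * Tᵀ * H = SF * D * B := by
    rw [hBG, hSF]
    simp only [Matrix.mul_assoc]
  have hMtM : (SF * D * B)ᵀ * (SF * D * B) = Bᵀ * (D * D) * B := by
    rw [Matrix.transpose_mul (SF * D) B, Matrix.transpose_mul SF D, hDt]
    simp only [Matrix.mul_assoc]
    rw [← Matrix.mul_assoc SFᵀ SF (D * B), hSFt, Matrix.one_mul]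
  have hDinv : D⁻¹ = Matrix.diagonal (fun p => (singularValue A (p.1 + 1))⁻¹) := by
    apply Matrix.inv_eq_right_inv
    rw [hD, Matrix.diagonal_mul_diagonal]
    rw [show (fun p : Fin r => singularValue A (p.1 + 1) * (singularValue A (p.1 + 1))⁻¹)
      = fun _ => (1 : ℝ) from funext fun p => mul_inv_cancel₀ (hσp p).ne']
    exact Matrix.diagonal_one
  have hP : pinvFCR (SF * D * B) = B⁻¹ * (D⁻¹ * SFᵀ) := by
    unfold pinvFCR
    rw [hMtM, Matrix.mul_inv_rev (Bᵀ * (D * D)) B, Matrix.mul_inv_rev Bᵀ (D * D)]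
    rw [Matrix.transpose_mul (SF * D) B, Matrix.transpose_mul SF D, hDt]
    rw [Matrix.mul_inv_rev D D]
    simp only [Matrix.mul_assoc]
    rw [← Matrix.mul_assoc (Bᵀ)⁻¹ Bᵀ (D * SFᵀ),
      Matrix.nonsing_inv_mul Bᵀ (by rw [Matrix.det_transpose]; exact hinv), Matrix.one_mul]
    rw [← Matrix.mul_assoc D⁻¹ D SFᵀ, Matrix.nonsing_inv_mul D hdetD, Matrix.one_mul]
  rw [hSig, hM, hP]
  refine sv_one_le _ (div_nonneg (sv_nonneg _ _) hσ.le) ?_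
  intro v
  set y : Fin m → ℝ := Sᵀ *ᵥ v with hy
  set u : Fin r → ℝ := SFᵀ *ᵥ v with hu
  set z : Fin r → ℝ := D⁻¹ *ᵥ u with hz
  have hPv : (B⁻¹ * (D⁻¹ * SFᵀ)) *ᵥ v = B⁻¹ *ᵥ z := by
    rw [hz, hu, Matrix.mulVec_mulVec, Matrix.mulVec_mulVec, Matrix.mul_assoc]
  have b1 := sv_one_mulVec_bound B⁻¹ z
  have b2 : z ⬝ᵥ z ≤ ((singularValue A r)⁻¹) ^ 2 * (u ⬝ᵥ u) := by
    rw [hz, hDinv]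
    simp only [dotProduct, Matrix.mulVec_diagonal]
    rw [Finset.mul_sum]
    refine Finset.sum_le_sum fun p _ => ?_
    have h5 : (singularValue A (p.1 + 1))⁻¹ ≤ (singularValue A r)⁻¹ :=
      inv_anti₀ hσ (sv_anti A (by omega) (by omega) hrn)
    have h6 : 0 ≤ (singularValue A (p.1 + 1))⁻¹ := inv_nonneg.mpr (hσp p).le
    calc (singularValue A (p.1 + 1))⁻¹ * u p * ((singularValue A (p.1 + 1))⁻¹ * u p)
        = ((singularValue A (p.1 + 1))⁻¹) ^ 2 * (u p * u p) := by ring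
      _ ≤ ((singularValue A r)⁻¹) ^ 2 * (u p * u p) :=
          mul_le_mul_of_nonneg_right (pow_le_pow_left₀ h6 h5 2) (mul_self_nonneg _)
  have hyy : y ⬝ᵥ y = v ⬝ᵥ v := by
    have h7 := dot_mulVec_self Sᵀ v
    have h8 : (Sᵀ)ᴴ = S := by
      rw [Matrix.conjTranspose_eq_transpose_of_trivial, Matrix.transpose_transpose]
    rw [h8, mul_eq_one_comm.mp hS, Matrix.one_mulVec] at h7
    rw [hy, h7]
  have hufy : u = Fᵀ *ᵥ y := by
    rw [hu, hy, hSF, Matrix.transpose_mul, ← Matrix.mulVec_mulVec]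
  have hFy : ∀ p, (Fᵀ *ᵥ y) p = y (Fin.castLE hrm p) := by
    intro p
    simp only [Matrix.mulVec, dotProduct, Matrix.transpose_apply, hF, Matrix.of_apply,
      ite_mul, one_mul, zero_mul]
    rw [Finset.sum_ite_eq' Finset.univ (Fin.castLE hrm p) y]
    simp
  have b3 : u ⬝ᵥ u ≤ v ⬝ᵥ v := by
    calc u ⬝ᵥ u = ∑ p : Fin r, y (Fin.castLE hrm p) * y (Fin.castLE hrm p) := by
          rw [hufy]; simp only [dotProduct, hFy]
      _ = ∑ k ∈ Finset.univ.image (Fin.castLE hrm), y k * y k := by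
          rw [Finset.sum_image (fun a _ b _ h => Fin.castLE_injective hrm h)]
      _ ≤ ∑ k, y k * y k :=
          Finset.sum_le_sum_of_subset_of_nonneg (Finset.subset_univ _)
            (fun k _ _ => mul_self_nonneg _)
      _ = v ⬝ᵥ v := hyy
  have hs2 : (0 : ℝ) ≤ (singularValue B⁻¹ 1) ^ 2 := sq_nonneg _
  rw [hPv]
  calc (B⁻¹ *ᵥ z) ⬝ᵥ (B⁻¹ *ᵥ z)
      ≤ (singularValue B⁻¹ 1) ^ 2 * (z ⬝ᵥ z) := b1
    _ ≤ (singularValue B⁻¹ 1) ^ 2 * (((singularValue A r)⁻¹) ^ 2 * (u ⬝ᵥ u)) :=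
        mul_le_mul_of_nonneg_left b2 hs2
    _ ≤ (singularValue B⁻¹ 1) ^ 2 * (((singularValue A r)⁻¹) ^ 2 * (v ⬝ᵥ v)) :=
        mul_le_mul_of_nonneg_left (mul_le_mul_of_nonneg_left b3 (sq_nonneg _)) hs2
    _ = (singularValue B⁻¹ 1 / singularValue A r) ^ 2 * (v ⬝ᵥ v) := by
        rw [div_pow, div_eq_mul_inv, ← inv_pow]; ring
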